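/- Let K, t, α, β, δ be natural numbers with 1 ≤ β ≤ α, t + α ≤ K, and δ·(t+β) = t+α, and fix a subset T ⊆ [K] with |T| = t+1. Then the number of pairs (S, 𝒫), where S ⊆ [K] with |S| = t+α and 𝒫 is a partition of S into δ pairwise disjoint blocks each of cardinality t+β such that T is contained in some block of 𝒫, equals Γ = C(K−t−1, α−1) · (α−1)! / ((δ−1)! · (β−1)! · ((t+β)!)^{δ−1}). (This is the key counting lemma in the proof of Theorem 1: every (t+1)-subset of users appears exactly Γ times over all multicast transmissions of the delivery algorithm, so splitting each subfile into Γ mini-files makes the delivery exact.) -/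

import Mathlib

open Nat

open Finset

def parts (s : Finset ℕ) (b : ℕ) : Finset (Finset (Finset ℕ)) :=
  s.powerset.powerset.filter (fun P => (∀ B ∈ P, B.card = b) ∧
    (∀ B ∈ P, ∀ B' ∈ P, B ≠ B' → Disjoint B B') ∧ P.sup id = s)

lemma mem_parts {s : Finset ℕ} {b : ℕ} {P : Finset (Finset ℕ)} : P ∈ parts s b ↔
    (∀ B ∈ P, B.card = b) ∧ (∀ B ∈ P, ∀ B' ∈ P, B ≠ B' → Disjoint B B') ∧ P.sup id = s := by
  simp only [parts, mem_filter, mem_powerset, and_iff_right_iff_imp]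
  rintro ⟨h1, h2, h3⟩ B hB
  simp only [mem_powerset]
  exact h3 ▸ Finset.le_sup (f := id) hB

lemma sup_card {b : ℕ} {P : Finset (Finset ℕ)}
    (hd : ∀ B ∈ P, ∀ B' ∈ P, B ≠ B' → Disjoint B B')
    (hc : ∀ B ∈ P, B.card = b) : (P.sup id).card = P.card * b := by
  rw [Finset.sup_eq_biUnion, Function.id_def, Finset.card_biUnion hd, Finset.sum_congr rfl hc,
    Finset.sum_const, smul_eq_mul]

lemma block_unique {P : Finset (Finset ℕ)} {a : ℕ} {B C : Finset ℕ}
    (hd : ∀ B ∈ P, ∀ B' ∈ P, B ≠ B' → Disjoint B B')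
    (hB : B ∈ P) (hC : C ∈ P) (haB : a ∈ B) (haC : a ∈ C) : B = C := by
  by_contra h
  exact (Finset.disjoint_left.mp (hd B hB C hC h)) haB haC

lemma filter_mem_eq {P : Finset (Finset ℕ)} {a : ℕ} {B : Finset ℕ}
    (hd : ∀ B ∈ P, ∀ B' ∈ P, B ≠ B' → Disjoint B B')
    (hB : B ∈ P) (haB : a ∈ B) : P.filter (fun C => a ∈ C) = {B} := by
  ext C
  simp only [mem_filter, mem_singleton]
  constructor
  · rintro ⟨hC, haC⟩; exact (block_unique hd hC hB haC haB)
  · rintro rfl; exact ⟨hB, haB⟩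


lemma insert_pairwise {Q : Finset (Finset ℕ)} {B : Finset ℕ}
    (h2 : ∀ C ∈ Q, ∀ C' ∈ Q, C ≠ C' → Disjoint C C')
    (hBQ : ∀ C ∈ Q, Disjoint B C) :
    ∀ C ∈ insert B Q, ∀ C' ∈ insert B Q, C ≠ C' → Disjoint C C' := by
  intro C hC C' hC' hne
  rcases Finset.mem_insert.mp hC with h | h <;> rcases Finset.mem_insert.mp hC' with h' | h'
  · exact absurd (h.trans h'.symm) hne
  · exact h ▸ hBQ C' h'
  · exact h' ▸ (hBQ C h).symm
  · exact h2 C h C' h' hne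

lemma parts_card {b : ℕ} (hb : 1 ≤ b) : ∀ m (s : Finset ℕ), s.card = m * b →
    (parts s b).card * (m ! * (b !)^m) = (m * b)! := by
  intro m
  induction m with
  | zero =>
    intro s hs
    have hse : s = ∅ := card_eq_zero.mp (by simpa using hs)
    subst hse
    have : parts ∅ b = {∅} := by
      ext P
      simp only [mem_parts, mem_singleton]
      constructor
      · rintro ⟨h1, h2, h3⟩
        by_contra hne
        obtain ⟨B, hB⟩ := Finset.nonempty_iff_ne_empty.mpr hne
        have hBs : B ⊆ ∅ := h3 ▸ Finset.le_sup (f := id) hB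
        have := h1 B hB
        simp [Finset.subset_empty.mp hBs] at this
        omega
      · rintro rfl; simp
    simp [this]
  | succ m ih =>
    intro s hs
    have hsne : s.Nonempty := by
      rw [← Finset.card_pos, hs]; positivity
    obtain ⟨a, ha⟩ := hsne
    set cho := (s.powersetCard b).filter (fun B => a ∈ B) with hcho
    -- fiber map
    have key : (parts s b).card = ∑ B ∈ cho, ((parts s b).filter
        (fun P => (P.filter (fun C => a ∈ C)).sup id = B)).card := by
      apply Finset.card_eq_sum_card_fiberwise
      intro P hP
      obtain ⟨h1, h2, h3⟩ := mem_parts.mp hP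
      obtain ⟨B, hB, haB⟩ := Finset.mem_sup.mp (h3 ▸ ha : a ∈ P.sup id)
      show (P.filter (fun C => a ∈ C)).sup id ∈ cho
      rw [filter_mem_eq h2 hB haB]
      simp only [hcho, mem_filter, Finset.sup_singleton, id, mem_powersetCard]
      exact ⟨⟨h3 ▸ Finset.le_sup (f := id) hB, h1 B hB⟩, haB⟩
    -- each fiber ≅ parts (s \ B) b
    have fib : ∀ B ∈ cho, ((parts s b).filter
        (fun P => (P.filter (fun C => a ∈ C)).sup id = B)).card = (parts (s \ B) b).card := by
      intro B hBc
      simp only [hcho, mem_filter, mem_powersetCard] at hBc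
      obtain ⟨⟨hBs, hBcard⟩, haB⟩ := hBc
      refine Finset.card_bij' (fun P _ => P.erase B) (fun Q _ => insert B Q) ?_ ?_ ?_ ?_
      · intro P hP
        simp only [mem_filter] at hP
        obtain ⟨hPm, hfP⟩ := hP
        obtain ⟨h1, h2, h3⟩ := mem_parts.mp hPm
        obtain ⟨B₀, hB₀, haB₀⟩ := Finset.mem_sup.mp (h3 ▸ ha : a ∈ P.sup id)
        have hBeq : B = B₀ := by
          rw [filter_mem_eq h2 hB₀ haB₀] at hfP
          simpa using hfP.symm
        subst hBeq
        show P.erase B ∈ parts (s \ B) b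
        rw [mem_parts]
        refine ⟨fun C hC => h1 C (Finset.mem_of_mem_erase hC),
          fun C hC C' hC' h => h2 C (Finset.mem_of_mem_erase hC) C' (Finset.mem_of_mem_erase hC') h, ?_⟩
        have hdisj : Disjoint B ((P.erase B).sup id) := by
          rw [Finset.disjoint_sup_right]
          intro C hC
          exact h2 B hB₀ C (Finset.mem_of_mem_erase hC) (Ne.symm (Finset.ne_of_mem_erase hC))
        have hunion : B ∪ (P.erase B).sup id = s := by
          conv_rhs => rw [← h3, ← Finset.insert_erase hB₀]
          rw [Finset.sup_insert]
          rfl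
        show (P.erase B).sup id = s \ B
        rw [← hunion, Finset.union_sdiff_cancel_left hdisj]
      · intro Q hQ
        obtain ⟨h1, h2, h3⟩ := mem_parts.mp hQ
        have hQsub : ∀ C ∈ Q, C ⊆ s \ B := fun C hC => h3 ▸ Finset.le_sup (f := id) hC
        have hBQ : ∀ C ∈ Q, Disjoint B C := by
          intro C hC
          exact Finset.disjoint_of_subset_right (hQsub C hC) Finset.disjoint_sdiff
        have hBnotin : B ∉ Q := by
          intro hmem
          have := hBQ B hmem
          rw [disjoint_self] at this
          rw [this] at hBcard; simp at hBcard; omega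
        simp only [mem_filter]
        constructor
        · rw [mem_parts]
          refine ⟨?_, ?_, ?_⟩
          · intro C hC
            rcases Finset.mem_insert.mp hC with rfl | hC
            · exact hBcard
            · exact h1 C hC
          · exact insert_pairwise h2 hBQ
          · rw [Finset.sup_insert (f := id), h3]
            exact Finset.union_sdiff_of_subset hBs
        · have : (insert B Q).filter (fun C => a ∈ C) = {B} := by
            exact filter_mem_eq (insert_pairwise h2 hBQ) (Finset.mem_insert_self B Q) haB
          rw [this]; simp
      · intro P hP
        simp only [mem_filter] at hP
        obtain ⟨hPm, hfP⟩ := hP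
        obtain ⟨h1, h2, h3⟩ := mem_parts.mp hPm
        obtain ⟨B₀, hB₀, haB₀⟩ := Finset.mem_sup.mp (h3 ▸ ha : a ∈ P.sup id)
        have hBeq : B = B₀ := by
          rw [filter_mem_eq h2 hB₀ haB₀] at hfP
          simpa using hfP.symm
        subst hBeq
        exact Finset.insert_erase hB₀
      · intro Q hQ
        obtain ⟨h1, h2, h3⟩ := mem_parts.mp hQ
        have hBnotin : B ∉ Q := by
          intro hmem
          have hQsub : B ⊆ s \ B := h3 ▸ Finset.le_sup (f := id) hmem
          have : a ∈ s \ B := hQsub haB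
          simp at this
          exact this.2 haB
        exact Finset.erase_insert hBnotin
    -- count cho
    have hb' : (m+1)*b = m*b + b := by ring
    have hchocard : cho.card = ((m+1)*b - 1).choose (b-1) := by
      have h1 : cho.card = ((s.erase a).powersetCard (b-1)).card := by
        refine Finset.card_bij' (fun B _ => B.erase a) (fun C _ => insert a C) ?_ ?_ ?_ ?_
        · intro B hB
          simp only [hcho, mem_filter, mem_powersetCard] at hB
          obtain ⟨⟨hBs, hBc⟩, haB⟩ := hB
          simp only [mem_powersetCard]
          exact ⟨Finset.erase_subset_erase a hBs, by rw [Finset.card_erase_of_mem haB, hBc]⟩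
        · intro C hC
          simp only [mem_powersetCard] at hC
          obtain ⟨hCs, hCc⟩ := hC
          have haC : a ∉ C := fun h => (Finset.notMem_erase a s) (hCs h)
          simp only [hcho, mem_filter, mem_powersetCard]
          refine ⟨⟨Finset.insert_subset ha (hCs.trans (Finset.erase_subset a s)), ?_⟩,
            Finset.mem_insert_self a C⟩
          rw [Finset.card_insert_of_notMem haC, hCc]
          omega
        · intro B hB
          simp only [hcho, mem_filter] at hB
          exact Finset.insert_erase hB.2
        · intro C hC
          simp only [mem_powersetCard] at hC
          have haC : a ∉ C := fun h => (Finset.notMem_erase a s) (hC.1 h)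
          exact Finset.erase_insert haC
      rw [h1, Finset.card_powersetCard, Finset.card_erase_of_mem ha, hs]
    -- assemble
    have step : ∀ B ∈ cho, (parts (s \ B) b).card * (m ! * (b !)^m) = (m*b)! := by
      intro B hB
      apply ih
      simp only [hcho, mem_filter, mem_powersetCard] at hB
      rw [Finset.card_sdiff_of_subset hB.1.1, hs, hB.1.2]
      omega
    have sum_eq : (parts s b).card * (m ! * (b !) ^ m) = cho.card * (m*b)! := by
      rw [key, Finset.sum_mul]
      trans (∑ _B ∈ cho, (m*b)!)
      · exact Finset.sum_congr rfl (fun B hB => by rw [fib B hB]; exact step B hB)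
      · rw [Finset.sum_const, smul_eq_mul]
    have hbpos : 0 < b := hb
    have hn1pos : 0 < (m+1)*b := by omega
    have hle : b - 1 ≤ (m+1)*b - 1 := by omega
    have hfac := Nat.choose_mul_factorial_mul_factorial hle
    have h1 : (m+1)*b - 1 - (b-1) = m*b := by omega
    rw [h1] at hfac
    have hbfac : b ! = b * (b-1)! := (Nat.mul_factorial_pred hbpos.ne').symm
    calc (parts s b).card * ((m+1)! * (b !) ^ (m+1))
        = ((parts s b).card * (m ! * (b !) ^ m)) * ((m+1) * b !) := by
          rw [Nat.factorial_succ, pow_succ]; ring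
      _ = (((m+1)*b - 1).choose (b-1)) * (m*b)! * ((m+1) * (b * (b-1)!)) := by
          rw [sum_eq, hchocard, ← hbfac]
      _ = (((m+1)*b - 1).choose (b-1) * (b-1)! * (m*b)!) * ((m+1)*b) := by ring
      _ = ((m+1)*b - 1)! * ((m+1)*b) := by rw [hfac]
      _ = ((m+1)*b)! := by rw [mul_comm]; exact Nat.mul_factorial_pred hn1pos.ne'

def fam (u : Finset ℕ) (m b : ℕ) : Finset (Finset (Finset ℕ)) :=
  u.powerset.powerset.filter (fun Q => Q.card = m ∧ (∀ B ∈ Q, B.card = b) ∧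
    (∀ B ∈ Q, ∀ B' ∈ Q, B ≠ B' → Disjoint B B'))

lemma mem_fam {u : Finset ℕ} {m b : ℕ} {Q : Finset (Finset ℕ)} : Q ∈ fam u m b ↔
    (∀ B ∈ Q, B ⊆ u) ∧ Q.card = m ∧ (∀ B ∈ Q, B.card = b) ∧
    (∀ B ∈ Q, ∀ B' ∈ Q, B ≠ B' → Disjoint B B') := by
  simp only [fam, mem_filter, mem_powerset]
  constructor
  · rintro ⟨hsub, h⟩
    exact ⟨fun B hB => mem_powerset.mp (hsub hB), h⟩
  · rintro ⟨hsub, h⟩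
    exact ⟨fun B hB => mem_powerset.mpr (hsub B hB), h⟩

lemma fam_card {u : Finset ℕ} {m b : ℕ} (hb : 1 ≤ b) :
    (fam u m b).card * (m ! * (b !)^m) = (u.card.choose (m*b)) * (m * b)! := by
  have key : (fam u m b).card = ∑ s ∈ u.powersetCard (m*b), ((fam u m b).filter
      (fun Q => Q.sup id = s)).card := by
    apply Finset.card_eq_sum_card_fiberwise
    intro Q hQ
    obtain ⟨hsub, hcard, hsz, hd⟩ := mem_fam.mp hQ
    simp only [Finset.mem_coe, mem_powersetCard]
    constructor
    · exact Finset.sup_le (fun B hB => hsub B hB)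
    · rw [sup_card hd hsz, hcard]
  have fib : ∀ s ∈ u.powersetCard (m*b),
      ((fam u m b).filter (fun Q => Q.sup id = s)).card = (parts s b).card := by
    intro s hs
    simp only [mem_powersetCard] at hs
    congr 1
    ext Q
    simp only [mem_filter, mem_fam, mem_parts]
    constructor
    · rintro ⟨⟨hsub, hcard, hsz, hd⟩, hsup⟩
      exact ⟨hsz, hd, hsup⟩
    · rintro ⟨hsz, hd, hsup⟩
      have hQsub : ∀ B ∈ Q, B ⊆ s := fun B hB => hsup ▸ Finset.le_sup (f := id) hB
      have hQcard : Q.card = m := by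
        have := sup_card hd hsz
        rw [hsup, hs.2] at this
        exact Nat.eq_of_mul_eq_mul_right (by omega) this.symm
      exact ⟨⟨fun B hB => (hQsub B hB).trans hs.1, hQcard, hsz, hd⟩, hsup⟩
  rw [key, Finset.sum_mul]
  trans (∑ _s ∈ u.powersetCard (m*b), (m*b)!)
  · refine Finset.sum_congr rfl (fun s hs => ?_)
    rw [fib s hs]
    exact parts_card hb m s (by simpa using (mem_powersetCard.mp hs).2)
  · rw [Finset.sum_const, smul_eq_mul, Finset.card_powersetCard]

lemma binom_aux {n j k : ℕ} (hj : j ≤ k) (hk : k ≤ n) :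
    n.choose j * ((n-j).choose (k-j)) * ((k-j)! * j !) = n.choose k * k ! := by
  apply Nat.eq_of_mul_eq_mul_right (Nat.factorial_pos (n-k))
  have h2 : (n-j).choose (k-j) * (k-j)! * (n-k)! = (n-j)! := by
    rw [show n-k = (n-j)-(k-j) by omega]
    exact Nat.choose_mul_factorial_mul_factorial (by omega)
  have h3 : n.choose j * j ! * (n-j)! = n ! := Nat.choose_mul_factorial_mul_factorial (by omega)
  have h4 : n.choose k * k ! * (n-k)! = n ! := Nat.choose_mul_factorial_mul_factorial hk
  calc n.choose j * ((n-j).choose (k-j)) * ((k-j)! * j !) * (n-k)!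
      = (n.choose j * j !) * ((n-j).choose (k-j) * (k-j)! * (n-k)!) := by ring
    _ = n.choose j * j ! * (n-j)! := by rw [h2]
    _ = n ! := h3
    _ = n.choose k * k ! * (n-k)! := h4.symm

lemma filter_subset_eq {P : Finset (Finset ℕ)} {T B : Finset ℕ} (hTne : T.Nonempty)
    (hd : ∀ B ∈ P, ∀ B' ∈ P, B ≠ B' → Disjoint B B')
    (hB : B ∈ P) (hTB : T ⊆ B) : P.filter (fun C => T ⊆ C) = {B} := by
  obtain ⟨a, ha⟩ := hTne
  ext C
  simp only [mem_filter, mem_singleton]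
  constructor
  · rintro ⟨hC, hTC⟩
    exact block_unique hd hC hB (hTC ha) (hTB ha)
  · rintro rfl; exact ⟨hB, hTB⟩

def GG (K t α β : ℕ) (T : Finset ℕ) : Finset (Finset (Finset ℕ)) :=
  (Finset.Icc 1 K).powerset.powerset.filter (fun P => (∀ B ∈ P, B.card = t+β) ∧
    (∀ B ∈ P, ∀ B' ∈ P, B ≠ B' → Disjoint B B') ∧ (P.sup id).card = t+α ∧ ∃ B ∈ P, T ⊆ B)

lemma mem_GG {K t α β : ℕ} {T : Finset ℕ} {P : Finset (Finset ℕ)} :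
    P ∈ GG K t α β T ↔ (∀ B ∈ P, B ⊆ Finset.Icc 1 K) ∧ (∀ B ∈ P, B.card = t+β) ∧
    (∀ B ∈ P, ∀ B' ∈ P, B ≠ B' → Disjoint B B') ∧ (P.sup id).card = t+α ∧ ∃ B ∈ P, T ⊆ B := by
  simp only [GG, mem_filter, mem_powerset]
  constructor
  · rintro ⟨hsub, h⟩
    exact ⟨fun B hB => mem_powerset.mp (hsub hB), h⟩
  · rintro ⟨hsub, h⟩
    exact ⟨fun B hB => mem_powerset.mpr (hsub B hB), h⟩

lemma GG_card (K t α β δ : ℕ) (hβ : 1 ≤ β) (hβα : β ≤ α) (hαK : t + α ≤ K)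
    (hδ : δ * (t + β) = t + α)
    (T : Finset ℕ) (hT : T ⊆ Finset.Icc 1 K) (hTcard : T.card = t + 1) :
    (GG K t α β T).card * ((δ - 1)! * (β - 1)! * ((t + β)!) ^ (δ - 1)) =
      (K - t - 1).choose (α - 1) * (α - 1)! := by
  have hTne : T.Nonempty := by rw [← Finset.card_pos, hTcard]; omega
  have hδpos : 1 ≤ δ := by
    rcases Nat.eq_zero_or_pos δ with h | h
    · subst h; simp at hδ; omega
    · exact h
  have hδ1 : (δ - 1) * (t + β) = α - β := by
    have : (δ - 1) * (t + β) = δ * (t + β) - (t + β) := by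
      rw [Nat.sub_one_mul]
    omega
  have hIcc : (Finset.Icc 1 K).card = K := by rw [Nat.card_Icc]; omega
  set choT := ((Finset.Icc 1 K).powersetCard (t+β)).filter (fun B => T ⊆ B) with hchoT
  have key : (GG K t α β T).card = ∑ B ∈ choT, ((GG K t α β T).filter
      (fun P => (P.filter (fun C => T ⊆ C)).sup id = B)).card := by
    apply Finset.card_eq_sum_card_fiberwise
    intro P hP
    obtain ⟨hsub, hsz, hd, hsupc, B, hB, hTB⟩ := mem_GG.mp hP
    show (P.filter (fun C => T ⊆ C)).sup id ∈ choT
    rw [filter_subset_eq hTne hd hB hTB]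
    simp only [hchoT, mem_filter, Finset.sup_singleton, id, mem_powersetCard]
    exact ⟨⟨hsub B hB, hsz B hB⟩, hTB⟩
  have fib : ∀ B ∈ choT, ((GG K t α β T).filter
      (fun P => (P.filter (fun C => T ⊆ C)).sup id = B)).card
      = (fam (Finset.Icc 1 K \ B) (δ-1) (t+β)).card := by
    intro B hBc
    simp only [hchoT, mem_filter, mem_powersetCard] at hBc
    obtain ⟨⟨hBs, hBcard⟩, hTB⟩ := hBc
    have hBne : B.Nonempty := by rw [← Finset.card_pos, hBcard]; omega
    refine Finset.card_bij' (fun P _ => P.erase B) (fun Q _ => insert B Q) ?_ ?_ ?_ ?_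
    · intro P hP
      simp only [mem_filter] at hP
      obtain ⟨hPm, hfP⟩ := hP
      obtain ⟨hsub, hsz, hd, hsupc, B₀, hB₀, hTB₀⟩ := mem_GG.mp hPm
      have hBeq : B = B₀ := by
        rw [filter_subset_eq hTne hd hB₀ hTB₀] at hfP
        simpa using hfP.symm
      subst hBeq
      have hPcard : P.card = δ := by
        have h := sup_card hd hsz
        rw [hsupc, ← hδ] at h
        exact (Nat.eq_of_mul_eq_mul_right (Nat.lt_of_lt_of_le Nat.zero_lt_one (by omega) : 0 < t + β) h.symm)
      show P.erase B ∈ fam (Finset.Icc 1 K \ B) (δ-1) (t+β)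
      rw [mem_fam]
      refine ⟨?_, by rw [Finset.card_erase_of_mem hB₀, hPcard], 
        fun C hC => hsz C (Finset.mem_of_mem_erase hC),
        fun C hC C' hC' h => hd C (Finset.mem_of_mem_erase hC) C' (Finset.mem_of_mem_erase hC') h⟩
      intro C hC
      rw [Finset.subset_sdiff]
      exact ⟨hsub C (Finset.mem_of_mem_erase hC),
        (hd B hB₀ C (Finset.mem_of_mem_erase hC) (Ne.symm (Finset.ne_of_mem_erase hC))).symm⟩
    · intro Q hQ
      obtain ⟨hsub, hcard, hsz, hd⟩ := mem_fam.mp hQ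
      have hBQ : ∀ C ∈ Q, Disjoint B C := fun C hC =>
        (Finset.disjoint_of_subset_right (hsub C hC) Finset.disjoint_sdiff)
      have hBnotin : B ∉ Q := by
        intro hmem
        have := hBQ B hmem
        rw [disjoint_self] at this
        exact hBne.ne_empty this
      have hd' := insert_pairwise hd hBQ
      have hsupdisj : Disjoint B (Q.sup id) := by
        rw [Finset.disjoint_sup_right]
        intro C hC
        exact hBQ C hC
      simp only [mem_filter]
      constructor
      · rw [mem_GG]
        refine ⟨?_, ?_, hd', ?_, B, Finset.mem_insert_self B Q, hTB⟩
        · intro C hC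
          rcases Finset.mem_insert.mp hC with h | h
          · exact h ▸ hBs
          · exact (hsub C h).trans (Finset.sdiff_subset)
        · intro C hC
          rcases Finset.mem_insert.mp hC with h | h
          · exact h ▸ hBcard
          · exact hsz C h
        · rw [Finset.sup_insert]
          show (B ∪ Q.sup id).card = t + α
          rw [Finset.card_union_of_disjoint hsupdisj, hBcard, sup_card hd hsz, hcard, hδ1]
          omega
      · rw [filter_subset_eq hTne hd' (Finset.mem_insert_self B Q) hTB]
        simp
    · intro P hP
      simp only [mem_filter] at hP
      obtain ⟨hPm, hfP⟩ := hP
      obtain ⟨hsub, hsz, hd, hsupc, B₀, hB₀, hTB₀⟩ := mem_GG.mp hPm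
      have hBeq : B = B₀ := by
        rw [filter_subset_eq hTne hd hB₀ hTB₀] at hfP
        simpa using hfP.symm
      subst hBeq
      exact Finset.insert_erase hB₀
    · intro Q hQ
      obtain ⟨hsub, hcard, hsz, hd⟩ := mem_fam.mp hQ
      have hBnotin : B ∉ Q := by
        intro hmem
        have h2 := (Finset.subset_sdiff.mp (hsub B hmem)).2
        rw [disjoint_self] at h2
        exact hBne.ne_empty h2
      exact Finset.erase_insert hBnotin
  have hchoTcard : choT.card = (K - t - 1).choose (β - 1) := by
    have h1 : choT.card = ((Finset.Icc 1 K \ T).powersetCard (β-1)).card := by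
      refine Finset.card_bij' (fun B _ => B \ T) (fun C _ => C ∪ T) ?_ ?_ ?_ ?_
      · intro B hB
        simp only [hchoT, mem_filter, mem_powersetCard] at hB
        obtain ⟨⟨hBs, hBc⟩, hTB⟩ := hB
        simp only [mem_powersetCard]
        refine ⟨Finset.sdiff_subset_sdiff hBs (le_refl T), ?_⟩
        rw [Finset.card_sdiff_of_subset hTB, hBc, hTcard]
        omega
      · intro C hC
        simp only [mem_powersetCard] at hC
        obtain ⟨hCs, hCc⟩ := hC
        have hdisj : Disjoint C T :=
          Finset.disjoint_of_subset_left hCs Finset.sdiff_disjoint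
        simp only [hchoT, mem_filter, mem_powersetCard]
        refine ⟨⟨Finset.union_subset (hCs.trans Finset.sdiff_subset) hT, ?_⟩,
          Finset.subset_union_right⟩
        rw [Finset.card_union_of_disjoint hdisj, hCc, hTcard]
        omega
      · intro B hB
        simp only [hchoT, mem_filter] at hB
        exact Finset.sdiff_union_of_subset hB.2
      · intro C hC
        simp only [mem_powersetCard] at hC
        have hdisj : Disjoint T C :=
          (Finset.disjoint_of_subset_left hC.1 Finset.sdiff_disjoint).symm
        show (C ∪ T) \ T = C
        rw [Finset.union_comm, Finset.union_sdiff_cancel_left hdisj]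
    rw [h1, Finset.card_powersetCard, Finset.card_sdiff_of_subset hT, hIcc, hTcard]
    congr 1
  have step : ∀ B ∈ choT, (fam (Finset.Icc 1 K \ B) (δ-1) (t+β)).card *
      ((δ-1)! * ((t+β)!)^(δ-1)) = (K-t-β).choose (α-β) * (α-β)! := by
    intro B hB
    simp only [hchoT, mem_filter, mem_powersetCard] at hB
    have hc : (Finset.Icc 1 K \ B).card = K - t - β := by
      rw [Finset.card_sdiff_of_subset hB.1.1, hIcc, hB.1.2]
      omega
    have := fam_card (u := Finset.Icc 1 K \ B) (m := δ-1) (b := t+β) (by omega)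
    rw [hc, hδ1] at this
    exact this
  have sum_eq : (GG K t α β T).card * ((δ-1)! * ((t+β)!)^(δ-1)) =
      choT.card * ((K-t-β).choose (α-β) * (α-β)!) := by
    rw [key, Finset.sum_mul]
    trans (∑ _B ∈ choT, (K-t-β).choose (α-β) * (α-β)!)
    · exact Finset.sum_congr rfl (fun B hB => by rw [fib B hB]; exact step B hB)
    · rw [Finset.sum_const, smul_eq_mul]
  calc (GG K t α β T).card * ((δ - 1)! * (β - 1)! * ((t + β)!) ^ (δ - 1))
      = ((GG K t α β T).card * ((δ-1)! * ((t+β)!)^(δ-1))) * (β-1)! := by ring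
    _ = (K - t - 1).choose (β-1) * ((K-t-β).choose (α-β) * (α-β)!) * (β-1)! := by
        rw [sum_eq, hchoTcard]
    _ = (K-t-1).choose (β-1) * ((K-t-1)-(β-1)).choose ((α-1)-(β-1)) * (((α-1)-(β-1))! * (β-1)!) := by
        rw [show (K-t-1)-(β-1) = K-t-β by omega, show (α-1)-(β-1) = α-β by omega]
        ring
    _ = (K - t - 1).choose (α - 1) * (α - 1)! := binom_aux (by omega) (by omega)

/-- Key counting lemma: for a fixed `(t+1)`-subset `T ⊆ [K]`, the number of pairs `(S, 𝒫)`
with `S ⊆ [K]`, `|S| = t+α`, `𝒫` a partition of `S` into `δ` blocks of cardinality `t+β`,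
such that `T` is contained in some block of `𝒫`, equals
`Γ = C(K−t−1, α−1)·(α−1)! / ((δ−1)!·(β−1)!·((t+β)!)^{δ−1})`. -/
theorem stmt_3 (K t α β δ : ℕ) (hβ : 1 ≤ β) (hβα : β ≤ α) (hαK : t + α ≤ K)
    (hδ : δ * (t + β) = t + α)
    (T : Finset ℕ) (hT : T ⊆ Finset.Icc 1 K) (hTcard : T.card = t + 1) :
    {p : Finset ℕ × Finset (Finset ℕ) |
        p.1 ⊆ Finset.Icc 1 K ∧ p.1.card = t + α ∧
        (∀ B ∈ p.2, B.card = t + β) ∧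
        (∀ B ∈ p.2, ∀ B' ∈ p.2, B ≠ B' → Disjoint B B') ∧
        p.2.sup id = p.1 ∧
        (∃ B ∈ p.2, T ⊆ B)}.ncard =
      (K - t - 1).choose (α - 1) * (α - 1)! /
        ((δ - 1)! * (β - 1)! * ((t + β)!) ^ (δ - 1)) := by
  classical
  set bigF := ((Finset.Icc 1 K).powerset ×ˢ (Finset.Icc 1 K).powerset.powerset).filter
    (fun p => p.1 ⊆ Finset.Icc 1 K ∧ p.1.card = t + α ∧
      (∀ B ∈ p.2, B.card = t + β) ∧
      (∀ B ∈ p.2, ∀ B' ∈ p.2, B ≠ B' → Disjoint B B') ∧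
      p.2.sup id = p.1 ∧ (∃ B ∈ p.2, T ⊆ B)) with hbigF
  have hsetEq : {p : Finset ℕ × Finset (Finset ℕ) |
        p.1 ⊆ Finset.Icc 1 K ∧ p.1.card = t + α ∧
        (∀ B ∈ p.2, B.card = t + β) ∧
        (∀ B ∈ p.2, ∀ B' ∈ p.2, B ≠ B' → Disjoint B B') ∧
        p.2.sup id = p.1 ∧
        (∃ B ∈ p.2, T ⊆ B)} = ↑bigF := by
    ext p
    simp only [Set.mem_setOf_eq, hbigF, Finset.coe_filter, Finset.mem_product,
      Finset.mem_powerset, Set.mem_setOf_eq]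
    constructor
    · rintro ⟨h1, h2, h3, h4, h5, h6⟩
      refine ⟨⟨h1, fun B hB => ?_⟩, h1, h2, h3, h4, h5, h6⟩
      rw [Finset.mem_powerset]
      exact (h5 ▸ Finset.le_sup (f := id) hB : B ⊆ p.1).trans h1
    · rintro ⟨-, h⟩
      exact h
  rw [hsetEq, Set.ncard_coe_finset]
  have hcardEq : bigF.card = (GG K t α β T).card := by
    refine Finset.card_bij' (fun p _ => p.2) (fun P _ => (P.sup id, P)) ?_ ?_ ?_ ?_
    · intro p hp
      simp only [hbigF, mem_filter] at hp
      obtain ⟨-, h1, h2, h3, h4, h5, h6⟩ := hp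
      rw [mem_GG]
      exact ⟨fun B hB => (h5 ▸ Finset.le_sup (f := id) hB : B ⊆ p.1).trans h1,
        h3, h4, by rw [h5]; exact h2, h6⟩
    · intro P hP
      obtain ⟨hsub, hsz, hd, hsupc, hex⟩ := mem_GG.mp hP
      simp only [hbigF, mem_filter, Finset.mem_product, Finset.mem_powerset]
      have hsupsub : P.sup id ⊆ Finset.Icc 1 K := Finset.sup_le (fun B hB => hsub B hB)
      exact ⟨⟨hsupsub, fun B hB => Finset.mem_powerset.mpr (hsub B hB)⟩,
        hsupsub, hsupc, hsz, hd, trivial, hex⟩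
    · intro p hp
      simp only [hbigF, mem_filter] at hp
      obtain ⟨-, h1, h2, h3, h4, h5, h6⟩ := hp
      show (p.2.sup id, p.2) = p
      rw [h5]
    · intro P hP
      rfl
  rw [hcardEq]
  have hD : 0 < (δ - 1)! * (β - 1)! * ((t + β)!) ^ (δ - 1) := by positivity
  rw [← GG_card K t α β δ hβ hβα hαK hδ T hT hTcard, Nat.mul_div_cancel _ hD]
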